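/- Let m ≥ 2 and p ≥ 0 be integers. For each n, let (u_{n,1},...,u_{n,m}) be uniformly distributed on the set of tuples of nonnegative integers summing to n - p. Then (u_{n,1}/n, ..., u_{n,m}/n) converges in distribution as n → ∞ to the Dirichlet distribution with parameter (1,...,1) on the simplex. -/

import Mathlib

open MeasureTheory Finset Filter
open scoped NNReal ENNReal

/-- The Dirichlet distribution with parameter `α : Fin m → ℝ`, defined as the pushforward,
under `y ↦ (y₁,...,y_{m-1}, 1 - Σ yᵢ)`, of the measure on `ℝ^{m-1}` with density
`(Γ(Σα)/∏Γ(αᵢ)) ∏ yᵢ^{αᵢ-1} (1-Σy)^{α_m-1}` on the open simplex. -/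
noncomputable def dirichletMeasure : {m : ℕ} → (Fin m → ℝ) → Measure (Fin m → ℝ)
  | 0, _ => 0
  | (n + 1), α =>
    Measure.map (fun y : Fin n → ℝ => Fin.snoc y (1 - ∑ i, y i))
      (((volume : Measure (Fin n → ℝ))).withDensity
        (fun y => ENNReal.ofReal
          (if (∀ i, 0 < y i) ∧ ∑ i, y i < 1 then
            (Real.Gamma (∑ i, α i) / ∏ i, Real.Gamma (α i)) *
              (∏ i : Fin n, y i ^ (α i.castSucc - 1)) *
              (1 - ∑ i, y i) ^ (α (Fin.last n) - 1)
          else 0)))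

open scoped Classical

/-- The set of compositions of `s` into `m` nonnegative parts, as a finite set of
functions `Fin m → ℕ`. -/
noncomputable def compositions (m s : ℕ) : Finset (Fin m → ℕ) :=
  (Fintype.piFinset (fun _ : Fin m => Finset.range (s + 1))).filter
    (fun u => ∑ i, u i = s)

/-- The uniform probability measure on compositions of `n - p` into `m` parts, rescaled
by `1/n`, viewed as a measure on `Fin m → ℝ`. -/
noncomputable def uniformCompMeasure (m p n : ℕ) : Measure (Fin m → ℝ) :=
  ((compositions m (n - p)).card : ENNReal)⁻¹ •
    ∑ u ∈ compositions m (n - p), Measure.dirac (fun i => (u i : ℝ) / n)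

namespace Stmt6Aux

/-- lattice points with sum ≤ s -/
noncomputable def L (k s : ℕ) : Finset (Fin k → ℕ) :=
  (Fintype.piFinset fun _ : Fin k => Finset.range (s+1)).filter (fun v => ∑ i, v i ≤ s)

lemma mem_L {k s : ℕ} {v : Fin k → ℕ} : v ∈ L k s ↔ ∑ i, v i ≤ s := by
  classical
  constructor
  · intro h; exact (Finset.mem_filter.1 h).2
  · intro h
    refine Finset.mem_filter.2 ⟨Fintype.mem_piFinset.2 fun i => ?_, h⟩
    have : v i ≤ s := le_trans (Finset.single_le_sum (fun j _ => Nat.zero_le _) (Finset.mem_univ i)) h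
    exact Finset.mem_range.2 (Nat.lt_succ_of_le this)

lemma mem_compositions {m s : ℕ} {u : Fin m → ℕ} :
    u ∈ compositions m s ↔ ∑ i, u i = s := by
  classical
  constructor
  · intro h; exact (Finset.mem_filter.1 h).2
  · intro h
    refine Finset.mem_filter.2 ⟨Fintype.mem_piFinset.2 fun i => ?_, h⟩
    have : u i ≤ s := h ▸ Finset.single_le_sum (fun j _ => Nat.zero_le _) (Finset.mem_univ i)
    exact Finset.mem_range.2 (Nat.lt_succ_of_le this)

noncomputable def pt (k s n : ℕ) (v : Fin k → ℕ) : Fin (k+1) → ℝ :=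
  fun j => (((Fin.snoc v (s - ∑ i, v i) : Fin (k+1) → ℕ) j : ℕ) : ℝ) / n

lemma sum_bij_comp (k s n : ℕ) (F : (Fin (k+1) → ℝ) → ℝ) :
    ∑ u ∈ compositions (k+1) s, F (fun i => (u i : ℝ) / n) = ∑ v ∈ L k s, F (pt k s n v) := by
  classical
  refine Finset.sum_nbij' (fun u => Fin.init u) (fun v => Fin.snoc v (s - ∑ i, v i)) ?_ ?_ ?_ ?_ ?_
  · intro u hu
    have hsum : ∑ i, u i = s := mem_compositions.1 hu
    refine mem_L.2 ?_
    have h2 : ∑ i : Fin k, u i.castSucc + u (Fin.last k) = s := by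
      rw [← hsum, Fin.sum_univ_castSucc]
    show ∑ i : Fin k, Fin.init u i ≤ s
    have h3 : ∑ i : Fin k, Fin.init u i = ∑ i : Fin k, u i.castSucc := rfl
    omega
  · intro v hv
    have hsum : ∑ i, v i ≤ s := mem_L.1 hv
    refine mem_compositions.2 ?_
    rw [Fin.sum_univ_castSucc]
    simp only [Fin.snoc_castSucc, Fin.snoc_last]
    omega
  · intro u hu
    have hsum : ∑ i, u i = s := mem_compositions.1 hu
    have h2 : ∑ i : Fin k, u i.castSucc + u (Fin.last k) = s := by
      rw [← hsum, Fin.sum_univ_castSucc]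
    have hinit : ∑ i : Fin k, Fin.init u i = ∑ i : Fin k, u i.castSucc := rfl
    have hlast : s - ∑ i : Fin k, Fin.init u i = u (Fin.last k) := by omega
    show Fin.snoc (Fin.init u) (s - ∑ i : Fin k, Fin.init u i) = u
    rw [hlast]
    exact Fin.snoc_init_self u
  · intro v hv
    exact Fin.init_snoc _ _
  · intro u hu
    have hsum : ∑ i, u i = s := mem_compositions.1 hu
    have h2 : ∑ i : Fin k, u i.castSucc + u (Fin.last k) = s := by
      rw [← hsum, Fin.sum_univ_castSucc]
    have hinit : ∑ i : Fin k, Fin.init u i = ∑ i : Fin k, u i.castSucc := rfl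
    have hlast : s - ∑ i : Fin k, Fin.init u i = u (Fin.last k) := by omega
    have hsnoc : (Fin.snoc (Fin.init u) (s - ∑ i : Fin k, Fin.init u i) : Fin (k+1) → ℕ) = u := by
      rw [hlast]; exact Fin.snoc_init_self u
    show F (fun i => (u i : ℝ) / n) = F (pt k s n (Fin.init u))
    unfold pt
    rw [show (fun j => (((Fin.snoc (Fin.init u) (s - ∑ i : Fin k, Fin.init u i) : Fin (k+1) → ℕ) j : ℕ) : ℝ) / n) = fun i => (u i : ℝ) / n from by rw [hsnoc]]

lemma card_compositions (m s : ℕ) [NeZero m] :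
    (compositions m s).card = (s + (m - 1)).choose (m - 1) := by
  classical
  have h1 : (compositions m s).card = Fintype.card {u : Fin m → ℕ // u ∈ compositions m s} := by
    simp [Fintype.card_coe]
  have h2 : Fintype.card {u : Fin m → ℕ // u ∈ compositions m s} = Fintype.card (Sym (Fin m) s) :=
    Fintype.card_congr ((Equiv.subtypeEquivRight (fun u => mem_compositions)).trans
      (Sym.equivNatSumOfFintype (Fin m) s).symm)
  rw [h1, h2, Sym.card_sym_eq_choose]
  rw [Fintype.card_fin]
  have hm : 1 ≤ m := Nat.one_le_iff_ne_zero.2 (NeZero.ne m)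
  have : m + s - 1 = s + (m - 1) := by omega
  rw [this]
  have h4 : (s + (m-1)) - (m-1) = s := by omega
  calc (s + (m-1)).choose s = (s + (m-1)).choose ((s+(m-1)) - (m-1)) := by rw [h4]
    _ = (s + (m-1)).choose (m-1) := Nat.choose_symm (Nat.le_add_left _ _)

lemma tendsto_card (k p : ℕ) :
    Tendsto (fun n : ℕ => ((compositions (k+1) (n-p)).card : ℝ) / (n:ℝ)^k) atTop
      (nhds (((Nat.factorial k) : ℝ)⁻¹)) := by
  have hk0 : ((Nat.factorial k) : ℝ) ≠ 0 := Nat.cast_ne_zero.2 (Nat.factorial_ne_zero k)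
  have hfac : ∀ n : ℕ, ((compositions (k+1) (n-p)).card : ℝ) / (n:ℝ)^k
      = ((Nat.factorial k) : ℝ)⁻¹ * ∏ i ∈ Finset.range k, ((((n-p)+k-i : ℕ)) : ℝ) / n := by
    intro n
    have hN : (compositions (k+1) (n-p)).card = ((n-p)+k).choose k := by
      rw [card_compositions]; simp
    have hdesc : (Nat.factorial k) * ((n-p)+k).choose k = ∏ i ∈ Finset.range k, ((n-p)+k-i) := by
      rw [← Nat.descFactorial_eq_factorial_mul_choose, Nat.descFactorial_eq_prod_range]
    have hcast : ((Nat.factorial k) : ℝ) * ((((n-p)+k).choose k : ℕ) : ℝ)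
        = ∏ i ∈ Finset.range k, ((((n-p)+k-i : ℕ)) : ℝ) := by
      exact_mod_cast congrArg (Nat.cast : ℕ → ℝ) hdesc
    rw [hN, Finset.prod_div_distrib, Finset.prod_const, Finset.card_range, ← hcast,
        ← mul_div_assoc, ← mul_assoc, inv_mul_cancel₀ hk0, one_mul]
  have hfactor : ∀ i ∈ Finset.range k,
      Tendsto (fun n : ℕ => ((((n-p)+k-i : ℕ)) : ℝ)/n) atTop (nhds 1) := by
    intro i hi
    have hi' : i < k := Finset.mem_range.1 hi
    have heq : (fun n : ℕ => ((((n-p)+k-i : ℕ)) : ℝ)/n) =ᶠ[atTop]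
        (fun n : ℕ => 1 + ((k:ℝ) - i - p)/n) := by
      filter_upwards [eventually_ge_atTop (p+1)] with n hn
      have hpn : p ≤ n := by omega
      have hik : i ≤ (n-p)+k := by omega
      have h1 : ((((n-p)+k-i : ℕ)) : ℝ) = (n:ℝ) - p + k - i := by
        push_cast [hpn, hik]; ring
      have hn0 : (n:ℝ) ≠ 0 := Nat.cast_ne_zero.2 (by omega)
      rw [h1]; field_simp; ring
    have hlim : Tendsto (fun n : ℕ => 1 + ((k:ℝ)-i-p)/n) atTop (nhds 1) := by
      have h0 : Tendsto (fun n : ℕ => ((k:ℝ)-i-p)/n) atTop (nhds 0) :=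
        Tendsto.div_atTop tendsto_const_nhds tendsto_natCast_atTop_atTop
      simpa using tendsto_const_nhds.add h0
    exact hlim.congr' heq.symm
  have hprod : Tendsto (fun n : ℕ => ∏ i ∈ Finset.range k, ((((n-p)+k-i : ℕ)) : ℝ)/n)
      atTop (nhds 1) := by
    simpa using tendsto_finset_prod (Finset.range k) hfactor
  have hfin : Tendsto (fun n : ℕ => ((Nat.factorial k) : ℝ)⁻¹ * ∏ i ∈ Finset.range k, ((((n-p)+k-i : ℕ)) : ℝ)/n)
      atTop (nhds (((Nat.factorial k) : ℝ)⁻¹ * 1)) := tendsto_const_nhds.mul hprod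
  rw [mul_one] at hfin
  exact hfin.congr fun n => (hfac n).symm

def cube (k n : ℕ) (v : Fin k → ℕ) : Set (Fin k → ℝ) :=
  Set.univ.pi fun i => {t : ℝ | (v i : ℝ) ≤ n * t ∧ n * t < v i + 1}

lemma mem_cube {k n : ℕ} {v : Fin k → ℕ} {x : Fin k → ℝ} :
    x ∈ cube k n v ↔ ∀ i, (v i : ℝ) ≤ n * x i ∧ n * x i < v i + 1 := by
  simp [cube]

lemma cube_eq_pi_Ico {k n : ℕ} (hn : 0 < n) (v : Fin k → ℕ) :
    cube k n v = Set.univ.pi fun i => Set.Ico ((v i : ℝ)/n) (((v i : ℝ)+1)/n) := by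
  have hn' : (0:ℝ) < n := by exact_mod_cast hn
  ext x
  simp only [cube, Set.mem_univ_pi, Set.mem_setOf_eq, Set.mem_Ico]
  refine forall_congr' fun i => ?_
  rw [div_le_iff₀' hn', lt_div_iff₀' hn']

lemma cube_measurable {k n : ℕ} (v : Fin k → ℕ) : MeasurableSet (cube k n v) := by
  refine MeasurableSet.univ_pi fun i => ?_
  have : {t : ℝ | (v i : ℝ) ≤ n * t ∧ n * t < v i + 1}
      = (fun t : ℝ => (n:ℝ) * t) ⁻¹' Set.Ico ((v i : ℝ)) ((v i : ℝ)+1) := rfl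
  rw [this]
  exact measurableSet_Ico.preimage (measurable_const_mul _)

lemma cube_volume {k n : ℕ} (hn : 0 < n) (v : Fin k → ℕ) :
    volume (cube k n v) = ENNReal.ofReal ((n:ℝ)⁻¹) ^ k := by
  rw [cube_eq_pi_Ico hn, volume_pi_pi]
  have hn' : (0:ℝ) < n := by exact_mod_cast hn
  have h : ∀ i : Fin k, volume (Set.Ico ((v i : ℝ)/n) (((v i : ℝ)+1)/n))
      = ENNReal.ofReal ((n:ℝ)⁻¹) := by
    intro i
    rw [Real.volume_Ico]
    congr 1
    field_simp
    ring
  simp [h]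

lemma cube_volume_toReal {k n : ℕ} (hn : 0 < n) (v : Fin k → ℕ) :
    (volume (cube k n v)).toReal = ((n:ℝ)^k)⁻¹ := by
  rw [cube_volume hn, ENNReal.toReal_pow, ENNReal.toReal_ofReal (by positivity), ← inv_pow]

lemma cube_volume_lt_top {k n : ℕ} (hn : 0 < n) (v : Fin k → ℕ) :
    volume (cube k n v) < ⊤ := by
  rw [cube_volume hn]
  exact ENNReal.pow_lt_top ENNReal.ofReal_lt_top

lemma cube_unique {k n : ℕ} {v v' : Fin k → ℕ} {x : Fin k → ℝ}
    (h : x ∈ cube k n v) (h' : x ∈ cube k n v') : v = v' := by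
  funext i
  obtain ⟨h1, h2⟩ := mem_cube.1 h i
  obtain ⟨h3, h4⟩ := mem_cube.1 h' i
  have c1 : (v i : ℝ) < v' i + 1 := lt_of_le_of_lt h1 h4
  have c2 : (v' i : ℝ) < v i + 1 := lt_of_le_of_lt h3 h2
  have c1' : v i < v' i + 1 := by exact_mod_cast c1
  have c2' : v' i < v i + 1 := by exact_mod_cast c2
  omega

lemma hyperplane_null (k : ℕ) : volume {x : Fin k → ℝ | ∑ i, x i = 1} = 0 := by
  let Lsum : (Fin k → ℝ) →ₗ[ℝ] ℝ := ∑ i, LinearMap.proj i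
  have hL : ∀ x : Fin k → ℝ, Lsum x = ∑ i, x i := by
    intro x; simp [Lsum, LinearMap.sum_apply]
  let s : AffineSubspace ℝ (Fin k → ℝ) :=
    AffineSubspace.comap Lsum.toAffineMap (AffineSubspace.mk' (1:ℝ) ⊥)
  have hs : ({x : Fin k → ℝ | ∑ i, x i = 1} : Set _) = ↑s := by
    ext x
    simp only [Set.mem_setOf_eq, s, AffineSubspace.coe_comap, Set.mem_preimage,
      LinearMap.coe_toAffineMap, SetLike.mem_coe, AffineSubspace.mem_mk',
      Submodule.mem_bot, vsub_eq_sub, sub_eq_zero, hL]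
  have hne : s ≠ ⊤ := by
    intro h
    have h0 : (0 : Fin k → ℝ) ∈ s := h ▸ AffineSubspace.mem_top ℝ _ 0
    have h1 : Lsum 0 ∈ AffineSubspace.mk' (1:ℝ) (⊥ : Submodule ℝ ℝ) := h0
    rw [AffineSubspace.mem_mk'] at h1
    simp at h1
  rw [hs]
  exact Measure.addHaar_affineSubspace _ s hne

lemma coord_null (k : ℕ) (i : Fin k) : volume {x : Fin k → ℝ | x i = 0} = 0 := by
  rw [volume_pi]
  exact Measure.pi_hyperplane _ i 0

/-- The open simplex in `ℝ^k`. -/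
def simplexSet (k : ℕ) : Set (Fin k → ℝ) := {y | (∀ i, 0 < y i) ∧ ∑ i, y i < 1}

noncomputable def fext (k : ℕ) (g : BoundedContinuousFunction (Fin (k+1) → ℝ) ℝ) :
    (Fin k → ℝ) → ℝ := fun y => g (Fin.snoc y (1 - ∑ i, y i))

noncomputable def Hfun (k p : ℕ) (g : BoundedContinuousFunction (Fin (k+1) → ℝ) ℝ)
    (n : ℕ) (x : Fin k → ℝ) : ℝ :=
  ∑ v ∈ L k (n-p), Set.indicator (cube k n v) (fun _ => g (pt k (n-p) n v)) x

set_option maxHeartbeats 1000000 in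
lemma tendsto_sum_integral (k p : ℕ) (g : BoundedContinuousFunction (Fin (k+1) → ℝ) ℝ) :
    Tendsto (fun n : ℕ => ((n:ℝ)^k)⁻¹ * ∑ v ∈ L k (n-p), g (pt k (n-p) n v)) atTop
      (nhds (∫ y : Fin k → ℝ, Set.indicator (simplexSet k) (fext k g) y)) := by
  classical
  -- integrability of each piece
  have hint_piece : ∀ (n : ℕ), 0 < n → ∀ v : Fin k → ℕ,
      Integrable (Set.indicator (cube k n v) (fun _ => g (pt k (n-p) n v))) volume := by
    intro n hn v
    rw [integrable_indicator_iff (cube_measurable v)]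
    exact integrableOn_const (cube_volume_lt_top hn v).ne
  -- Step A : exact value of the integral of `Hfun`
  have hint : ∀ n : ℕ, 0 < n →
      ∫ x, Hfun k p g n x = ((n:ℝ)^k)⁻¹ * ∑ v ∈ L k (n-p), g (pt k (n-p) n v) := by
    intro n hn
    unfold Hfun
    rw [integral_finset_sum _ (fun v _ => hint_piece n hn v), Finset.mul_sum]
    refine Finset.sum_congr rfl fun v hv => ?_
    rw [integral_indicator_const _ (cube_measurable v), measureReal_def, cube_volume_toReal hn v, smul_eq_mul]
  -- measurability
  have hHmeas : ∀ n : ℕ, AEStronglyMeasurable (Hfun k p g n) volume := by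
    intro n
    exact (Finset.measurable_sum _ fun v _ =>
      measurable_const.indicator (cube_measurable v)).aestronglyMeasurable
  -- dominating function
  set B : Set (Fin k → ℝ) := Set.univ.pi fun _ => Set.Icc (0:ℝ) 2 with hBdef
  have hBmeas : MeasurableSet B := MeasurableSet.univ_pi fun i => measurableSet_Icc
  have hBvol : volume B < ⊤ := by
    rw [hBdef, volume_pi_pi]
    simp only [Real.volume_Icc, Finset.prod_const, Finset.card_univ, Fintype.card_fin]
    exact ENNReal.pow_lt_top ENNReal.ofReal_lt_top
  have hbound_int : Integrable (Set.indicator B fun _ => ‖g‖) volume := by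
    rw [integrable_indicator_iff hBmeas]
    exact integrableOn_const hBvol.ne
  -- the bound
  have h_bound : ∀ᶠ n : ℕ in atTop, ∀ᵐ x : Fin k → ℝ,
      ‖Hfun k p g n x‖ ≤ Set.indicator B (fun _ => ‖g‖) x := by
    filter_upwards [eventually_ge_atTop 1] with n hn1
    refine Filter.Eventually.of_forall fun x => ?_
    by_cases hex : ∃ v ∈ L k (n-p), x ∈ cube k n v
    · obtain ⟨v, hv, hxv⟩ := hex
      have hHx : Hfun k p g n x = g (pt k (n-p) n v) := by
        unfold Hfun
        rw [Finset.sum_eq_single_of_mem v hv]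
        · exact Set.indicator_of_mem hxv _
        · intro v' hv' hne
          exact Set.indicator_of_notMem (fun hx' => hne (cube_unique hx' hxv)) _
      have hxB : x ∈ B := by
        intro i _
        have h1 := (mem_cube.1 hxv i).1
        have h2 := (mem_cube.1 hxv i).2
        have hvn : (v i : ℝ) ≤ n := by
          have hvi : v i ≤ n - p := le_trans
            (Finset.single_le_sum (fun j _ => Nat.zero_le _) (Finset.mem_univ i)) (mem_L.1 hv)
          have hvi' : v i ≤ n := by omega
          exact_mod_cast hvi'
        have hn' : (1:ℝ) ≤ n := by exact_mod_cast hn1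
        constructor
        · nlinarith [(Nat.cast_nonneg (v i) : (0:ℝ) ≤ (v i : ℝ))]
        · nlinarith
      rw [hHx, Set.indicator_of_mem hxB]
      exact g.norm_coe_le_norm _
    · push_neg at hex
      have hHx : Hfun k p g n x = 0 := by
        unfold Hfun
        exact Finset.sum_eq_zero fun v hv => Set.indicator_of_notMem (hex v hv) _
      rw [hHx, norm_zero]
      exact Set.indicator_nonneg (fun _ _ => norm_nonneg _) x
  -- pointwise convergence on the good set
  have h_lim_pt : ∀ x : Fin k → ℝ, (∀ i, x i ≠ 0) → (∑ i, x i ≠ 1) →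
      Tendsto (fun n => Hfun k p g n x) atTop
        (nhds (Set.indicator (simplexSet k) (fext k g) x)) := by
    intro x hx0 hx1
    rcases lt_trichotomy (∑ i, x i) 1 with hlt | heq1 | hgt
    · by_cases hpos : ∀ i, 0 < x i
      · -- main case : x in the open simplex
        set w : ℕ → Fin k → ℕ := fun n i => (⌊(n:ℝ) * x i⌋).toNat with hwdef
        have hsx0 : 0 ≤ ∑ i, x i := Finset.sum_nonneg fun i _ => (hpos i).le
        have hev : ∀ᶠ n : ℕ in atTop, (p:ℝ) ≤ n * (1 - ∑ i, x i) ∧ 1 ≤ n := by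
          have ht : Tendsto (fun n : ℕ => (n:ℝ) * (1 - ∑ i, x i)) atTop atTop :=
            Tendsto.atTop_mul_const (by linarith)
              (tendsto_natCast_atTop_atTop : Tendsto (fun n : ℕ => (n:ℝ)) atTop atTop)
          exact (ht.eventually_ge_atTop ((p:ℝ))).and (eventually_ge_atTop 1)
        have hw_cast : ∀ n : ℕ, 1 ≤ n → ∀ i, ((w n i : ℕ) : ℝ) = ((⌊(n:ℝ) * x i⌋ : ℤ) : ℝ) := by
          intro n hn i
          have h0 : (0:ℤ) ≤ ⌊(n:ℝ) * x i⌋ :=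
            Int.floor_nonneg.2 (mul_nonneg (Nat.cast_nonneg n) (hpos i).le)
          have h1 := Int.toNat_of_nonneg h0
          exact_mod_cast congrArg (fun z : ℤ => (z : ℝ)) h1
        have hmem : ∀ n : ℕ, (p:ℝ) ≤ n * (1 - ∑ i, x i) → 1 ≤ n →
            x ∈ cube k n (w n) ∧ w n ∈ L k (n-p) := by
          intro n hnp hn1
          have hn' : (0:ℝ) < n := by exact_mod_cast hn1
          have hcube : x ∈ cube k n (w n) := by
            refine mem_cube.2 fun i => ?_
            rw [hw_cast n hn1 i]
            exact ⟨Int.floor_le _, Int.lt_floor_add_one _⟩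
          refine ⟨hcube, mem_L.2 ?_⟩
          have hple : (p:ℝ) ≤ n := by nlinarith
          have hple' : p ≤ n := by exact_mod_cast hple
          have hr : ∑ i, ((w n i : ℕ):ℝ) ≤ ((n - p : ℕ) : ℝ) := by
            have h1 : ∑ i, ((w n i : ℕ):ℝ) ≤ ∑ i, (n:ℝ) * x i :=
              Finset.sum_le_sum fun i _ => by rw [hw_cast n hn1 i]; exact Int.floor_le _
            have h2 : ∑ i, (n:ℝ) * x i = n * ∑ i, x i := by rw [← Finset.mul_sum]
            have h3 : ((n - p : ℕ) : ℝ) = (n:ℝ) - p := by push_cast [hple']; ring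
            nlinarith
          have hr' : ((∑ i, w n i : ℕ) : ℝ) ≤ ((n - p : ℕ) : ℝ) := by
            push_cast at hr ⊢
            exact hr
          exact_mod_cast hr'
        have heqH : (fun n => Hfun k p g n x) =ᶠ[atTop]
            (fun n => g (pt k (n-p) n (w n))) := by
          filter_upwards [hev] with n hn
          obtain ⟨hnp, hn1⟩ := hn
          obtain ⟨hcube, hLn⟩ := hmem n hnp hn1
          unfold Hfun
          rw [Finset.sum_eq_single_of_mem (w n) hLn]
          · exact Set.indicator_of_mem hcube _
          · intro v' hv' hne
            exact Set.indicator_of_notMem (fun hx' => hne (cube_unique hx' hcube)) _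
        have hcoord : ∀ i, Tendsto (fun n : ℕ => ((w n i : ℕ):ℝ)/n) atTop (nhds (x i)) := by
          intro i
          have hup : ∀ᶠ n : ℕ in atTop, ((w n i : ℕ):ℝ)/n ≤ x i := by
            filter_upwards [eventually_ge_atTop 1] with n hn1
            have hn' : (0:ℝ) < n := by exact_mod_cast hn1
            rw [div_le_iff₀ hn', hw_cast n hn1 i]
            have := Int.floor_le ((n:ℝ) * x i)
            nlinarith
          have hlo : ∀ᶠ n : ℕ in atTop, x i - 1/(n:ℝ) ≤ ((w n i : ℕ):ℝ)/n := by
            filter_upwards [eventually_ge_atTop 1] with n hn1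
            have hn' : (0:ℝ) < n := by exact_mod_cast hn1
            rw [sub_le_iff_le_add, ← add_div]
            rw [le_div_iff₀ hn', hw_cast n hn1 i]
            have := Int.lt_floor_add_one ((n:ℝ) * x i)
            nlinarith
          have hlim_lo : Tendsto (fun n : ℕ => x i - 1/(n:ℝ)) atTop (nhds (x i)) := by
            have h0 := tendsto_one_div_atTop_nhds_zero_nat (𝕜 := ℝ)
            simpa using tendsto_const_nhds.sub h0
          exact tendsto_of_tendsto_of_tendsto_of_le_of_le' hlim_lo tendsto_const_nhds hlo hup
        have hsumlim : Tendsto (fun n : ℕ => ∑ i, ((w n i : ℕ):ℝ)/n) atTop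
            (nhds (∑ i, x i)) := tendsto_finset_sum _ fun i _ => hcoord i
        have hplim : Tendsto (fun n : ℕ => (p:ℝ)/n) atTop (nhds 0) :=
          Tendsto.div_atTop tendsto_const_nhds tendsto_natCast_atTop_atTop
        have hptlim : Tendsto (fun n => pt k (n-p) n (w n)) atTop
            (nhds (Fin.snoc x (1 - ∑ i, x i))) := by
          refine tendsto_pi_nhds.2 fun j => ?_
          refine Fin.lastCases ?_ (fun i => ?_) j
          · have hfun : (fun n : ℕ => pt k (n-p) n (w n) (Fin.last k))
                = fun n : ℕ => (((n-p) - ∑ i, w n i : ℕ):ℝ)/n := by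
              funext n; simp [pt, Fin.snoc_last]
            have htarget : (Fin.snoc x (1 - ∑ i, x i) : Fin (k+1) → ℝ) (Fin.last k)
                = 1 - ∑ i, x i := Fin.snoc_last _ _
            rw [hfun, htarget]
            have heq2 : (fun n : ℕ => 1 - (p:ℝ)/n - ∑ i, ((w n i : ℕ):ℝ)/n) =ᶠ[atTop]
                (fun n : ℕ => (((n-p) - ∑ i, w n i : ℕ):ℝ)/n) := by
              filter_upwards [hev] with n hn
              obtain ⟨hnp, hn1⟩ := hn
              obtain ⟨hcube, hLn⟩ := hmem n hnp hn1
              have hn' : (0:ℝ) < n := by exact_mod_cast hn1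
              have hple : (p:ℝ) ≤ n := by nlinarith
              have hple' : p ≤ n := by exact_mod_cast hple
              have hWle : ∑ i, w n i ≤ n - p := mem_L.1 hLn
              have hcast : ((((n-p) - ∑ i, w n i : ℕ)):ℝ)
                  = (n:ℝ) - p - ((∑ i, w n i : ℕ):ℝ) := by
                push_cast [hWle, hple']; ring
              have hsumcast : ∑ i, ((w n i : ℕ):ℝ)/n = ((∑ i, w n i : ℕ):ℝ)/n := by
                rw [← Finset.sum_div]; push_cast; ring
              rw [hcast, hsumcast]
              field_simp
            have hlim2 : Tendsto (fun n : ℕ => 1 - (p:ℝ)/n - ∑ i, ((w n i:ℕ):ℝ)/n) atTop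
                (nhds (1 - 0 - ∑ i, x i)) := (tendsto_const_nhds.sub hplim).sub hsumlim
            rw [show (1:ℝ) - 0 - ∑ i, x i = 1 - ∑ i, x i by ring] at hlim2
            exact hlim2.congr' heq2
          · have hfun : (fun n : ℕ => pt k (n-p) n (w n) (Fin.castSucc i))
                = fun n : ℕ => ((w n i : ℕ):ℝ)/n := by
              funext n; simp [pt, Fin.snoc_castSucc]
            have htarget : (Fin.snoc x (1 - ∑ i, x i) : Fin (k+1) → ℝ) (Fin.castSucc i)
                = x i := Fin.snoc_castSucc _ _ _
            rw [hfun, htarget]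
            exact hcoord i
        have hflim : Tendsto (fun n => g (pt k (n-p) n (w n))) atTop
            (nhds (g (Fin.snoc x (1 - ∑ i, x i)))) :=
          (g.continuous.tendsto _).comp hptlim
        have hxΔ : x ∈ simplexSet k := ⟨hpos, hlt⟩
        rw [Set.indicator_of_mem hxΔ]
        exact hflim.congr' heqH.symm
      · -- some coordinate is negative
        push_neg at hpos
        obtain ⟨j, hj⟩ := hpos
        have hneg : x j < 0 := lt_of_le_of_ne hj (hx0 j)
        have hzero : ∀ᶠ n : ℕ in atTop, Hfun k p g n x = 0 := by
          filter_upwards [eventually_ge_atTop 1] with n hn1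
          unfold Hfun
          refine Finset.sum_eq_zero fun v hv => Set.indicator_of_notMem (fun hxv => ?_) _
          have h1 := (mem_cube.1 hxv j).1
          have hn' : (1:ℝ) ≤ n := by exact_mod_cast hn1
          nlinarith [(Nat.cast_nonneg (v j) : (0:ℝ) ≤ (v j : ℝ))]
        have hind : Set.indicator (simplexSet k) (fext k g) x = 0 :=
          Set.indicator_of_notMem (fun hxΔ => absurd (hxΔ.1 j) (not_lt.2 hneg.le)) _
        rw [hind]
        exact tendsto_const_nhds.congr' (hzero.mono fun n h => h.symm)
    · exact absurd heq1 hx1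
    · -- sum exceeds 1
      have hev : ∀ᶠ n : ℕ in atTop, (k:ℝ) + 1 ≤ n * (∑ i, x i - 1) := by
        have ht : Tendsto (fun n : ℕ => (n:ℝ) * (∑ i, x i - 1)) atTop atTop :=
          Tendsto.atTop_mul_const (by linarith)
            (tendsto_natCast_atTop_atTop : Tendsto (fun n : ℕ => (n:ℝ)) atTop atTop)
        exact ht.eventually_ge_atTop ((k:ℝ) + 1)
      have hzero : ∀ᶠ n : ℕ in atTop, Hfun k p g n x = 0 := by
        filter_upwards [hev, eventually_ge_atTop 1] with n hn hn1
        unfold Hfun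
        refine Finset.sum_eq_zero fun v hv => Set.indicator_of_notMem (fun hxv => ?_) _
        have hub : ∑ i, (v i : ℝ) ≤ n := by
          have h1 : ∑ i, v i ≤ n - p := mem_L.1 hv
          have h2 : ∑ i, v i ≤ n := by omega
          have h3 : ((∑ i, v i : ℕ) : ℝ) ≤ (n:ℝ) := by exact_mod_cast h2
          push_cast at h3
          exact h3
        have hlb : ∀ i, (n:ℝ) * x i - 1 ≤ (v i : ℝ) := fun i => by
          have := (mem_cube.1 hxv i).2; linarith
        have hsum : (n:ℝ) * (∑ i, x i) - k ≤ ∑ i, (v i : ℝ) := by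
          have h4 := Finset.sum_le_sum (fun i (_ : i ∈ Finset.univ) => hlb i)
          have hkcard : ∑ i : Fin k, ((n:ℝ) * x i - 1) = n * (∑ i, x i) - k := by
            rw [Finset.sum_sub_distrib, ← Finset.mul_sum]; simp
          rw [hkcard] at h4
          exact h4
        linarith
      have hind : Set.indicator (simplexSet k) (fext k g) x = 0 :=
        Set.indicator_of_notMem (fun hxΔ => absurd hxΔ.2 (not_lt.2 hgt.le)) _
      rw [hind]
      exact tendsto_const_nhds.congr' (hzero.mono fun n h => h.symm)
  -- upgrade to a.e. convergence
  have hnull : volume ((⋃ i, {x : Fin k → ℝ | x i = 0}) ∪ {x : Fin k → ℝ | ∑ i, x i = 1}) = 0 :=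
    measure_union_null (measure_iUnion_null fun i => coord_null k i) (hyperplane_null k)
  have h_lim : ∀ᵐ x : Fin k → ℝ, Tendsto (fun n => Hfun k p g n x) atTop
      (nhds (Set.indicator (simplexSet k) (fext k g) x)) := by
    rw [ae_iff]
    refine measure_mono_null ?_ hnull
    intro x hx
    simp only [Set.mem_setOf_eq] at hx
    by_contra hxn
    simp only [Set.mem_union, Set.mem_iUnion, Set.mem_setOf_eq] at hxn
    push_neg at hxn
    exact hx (h_lim_pt x hxn.1 hxn.2)
  -- dominated convergence
  have key : Tendsto (fun n => ∫ x, Hfun k p g n x) atTop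
      (nhds (∫ y : Fin k → ℝ, Set.indicator (simplexSet k) (fext k g) y)) :=
    tendsto_integral_filter_of_dominated_convergence _
      (Filter.Eventually.of_forall hHmeas) h_bound hbound_int h_lim
  refine key.congr' ?_
  filter_upwards [eventually_ge_atTop 1] with n hn1
  exact hint n hn1

lemma simplexSet_measurable (k : ℕ) : MeasurableSet (simplexSet k) := by
  have h1 : MeasurableSet {y : Fin k → ℝ | ∀ i, 0 < y i} := by
    have : {y : Fin k → ℝ | ∀ i, 0 < y i} = ⋂ i, {y : Fin k → ℝ | 0 < y i} := by
      ext y; simp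
    rw [this]
    exact MeasurableSet.iInter fun i =>
      measurableSet_lt measurable_const (measurable_pi_apply i)
  have h2 : MeasurableSet {y : Fin k → ℝ | ∑ i, y i < 1} :=
    measurableSet_lt (Finset.measurable_sum _ fun i _ => measurable_pi_apply i) measurable_const
  exact h1.inter h2

lemma snoc_measurable (k : ℕ) :
    Measurable (fun y : Fin k → ℝ => (Fin.snoc y (1 - ∑ i, y i) : Fin (k+1) → ℝ)) := by
  refine measurable_pi_lambda _ fun j => ?_
  refine Fin.lastCases ?_ (fun i => ?_) j
  · have : (fun y : Fin k → ℝ => (Fin.snoc y (1 - ∑ i, y i) : Fin (k+1) → ℝ) (Fin.last k))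
        = fun y : Fin k → ℝ => 1 - ∑ i, y i := by
      funext y; exact Fin.snoc_last _ _
    rw [this]
    exact measurable_const.sub (Finset.measurable_sum _ fun i _ => measurable_pi_apply i)
  · have : (fun y : Fin k → ℝ => (Fin.snoc y (1 - ∑ i, y i) : Fin (k+1) → ℝ) (Fin.castSucc i))
        = fun y : Fin k → ℝ => y i := by
      funext y; exact Fin.snoc_castSucc _ _ _
    rw [this]
    exact measurable_pi_apply i

lemma dirichlet_integral (k : ℕ) (g : BoundedContinuousFunction (Fin (k+1) → ℝ) ℝ) :
    ∫ x, g x ∂(dirichletMeasure (fun _ : Fin (k+1) => (1 : ℝ)))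
      = (Nat.factorial k : ℝ) * ∫ y : Fin k → ℝ,
          Set.indicator (simplexSet k) (fext k g) y := by
  classical
  have hdir : dirichletMeasure (fun _ : Fin (k+1) => (1 : ℝ))
      = Measure.map (fun y : Fin k → ℝ => Fin.snoc y (1 - ∑ i, y i))
        (((volume : Measure (Fin k → ℝ))).withDensity
          (fun y => ENNReal.ofReal
            (if (∀ i, 0 < y i) ∧ ∑ i, y i < 1 then
              (Real.Gamma (∑ _i : Fin (k+1), (1:ℝ)) / ∏ _i : Fin (k+1), Real.Gamma 1) *
                (∏ i : Fin k, y i ^ ((1:ℝ) - 1)) *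
                (1 - ∑ i, y i) ^ ((1:ℝ) - 1)
            else 0))) := rfl
  have hdens : (fun y : Fin k → ℝ => ENNReal.ofReal
        (if (∀ i, 0 < y i) ∧ ∑ i, y i < 1 then
          (Real.Gamma (∑ _i : Fin (k+1), (1:ℝ)) / ∏ _i : Fin (k+1), Real.Gamma 1) *
            (∏ i : Fin k, y i ^ ((1:ℝ) - 1)) *
            (1 - ∑ i, y i) ^ ((1:ℝ) - 1)
        else 0))
      = fun y : Fin k → ℝ => ENNReal.ofReal
          (if (∀ i, 0 < y i) ∧ ∑ i, y i < 1 then (Nat.factorial k : ℝ) else 0) := by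
    funext y
    congr 1
    split_ifs with h
    · have hsum : (∑ _i : Fin (k+1), (1:ℝ)) = ((k:ℝ) + 1) := by
        simp
      have hGamma : Real.Gamma ((k:ℝ) + 1) = (Nat.factorial k : ℝ) := by
        exact_mod_cast Real.Gamma_nat_eq_factorial k
      simp [hsum, hGamma, Real.Gamma_one, Real.rpow_zero]
    · rfl
  have hΔm := simplexSet_measurable k
  have hmeas : Measurable (fun y : Fin k → ℝ =>
      (Real.toNNReal (if (∀ i, 0 < y i) ∧ ∑ i, y i < 1 then (Nat.factorial k : ℝ) else 0))) := by
    refine Measurable.real_toNNReal ?_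
    exact Measurable.ite (by exact hΔm) measurable_const measurable_const
  rw [hdir, hdens]
  rw [MeasureTheory.integral_map (snoc_measurable k).aemeasurable
    g.continuous.aestronglyMeasurable]
  have hofReal : (fun y : Fin k → ℝ => ENNReal.ofReal
        (if (∀ i, 0 < y i) ∧ ∑ i, y i < 1 then (Nat.factorial k : ℝ) else 0))
      = fun y : Fin k → ℝ =>
        ((Real.toNNReal (if (∀ i, 0 < y i) ∧ ∑ i, y i < 1 then (Nat.factorial k : ℝ) else 0)
          : ℝ≥0) : ENNReal) := rfl
  rw [hofReal, integral_withDensity_eq_integral_smul hmeas]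
  have hsmul : ∀ y : Fin k → ℝ,
      (Real.toNNReal (if (∀ i, 0 < y i) ∧ ∑ i, y i < 1 then (Nat.factorial k : ℝ) else 0))
        • g (Fin.snoc y (1 - ∑ i, y i))
      = (Nat.factorial k : ℝ) * Set.indicator (simplexSet k) (fext k g) y := by
    intro y
    by_cases h : (∀ i, 0 < y i) ∧ ∑ i, y i < 1
    · have hy : y ∈ simplexSet k := h
      rw [if_pos h, Set.indicator_of_mem hy, NNReal.smul_def,
        Real.coe_toNNReal _ (by positivity)]
      rfl
    · have hy : y ∉ simplexSet k := h
      rw [if_neg h, Set.indicator_of_notMem hy]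
      simp
  simp_rw [hsmul]
  rw [integral_const_mul]

end Stmt6Aux

open Stmt6Aux

/-- Let `m ≥ 2` and `p ≥ 0`. If `(u_{n,1},...,u_{n,m})` is uniform on the tuples of
nonnegative integers summing to `n - p`, then `(u_{n,1}/n,...,u_{n,m}/n)` converges in
distribution, as `n → ∞`, to the Dirichlet distribution with parameter `(1,...,1)`. -/
theorem stmt_6 (m p : ℕ) (hm : 2 ≤ m) :
    ∀ g : BoundedContinuousFunction (Fin m → ℝ) ℝ,
      Tendsto (fun n : ℕ => ∫ x, g x ∂(uniformCompMeasure m p n)) atTop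
        (nhds (∫ x, g x ∂(dirichletMeasure (fun _ : Fin m => (1 : ℝ))))) := by
  obtain ⟨k, rfl⟩ : ∃ k, m = k + 1 := ⟨m - 1, by omega⟩
  intro g
  have hcardpos : ∀ n : ℕ, 0 < (compositions (k+1) (n-p)).card := by
    intro n
    rw [card_compositions]
    simpa using Nat.choose_pos (Nat.le_add_left k (n-p))
  have hLHS : ∀ n : ℕ, ∫ x, g x ∂(uniformCompMeasure (k+1) p n)
      = ((compositions (k+1) (n-p)).card : ℝ)⁻¹ * ∑ v ∈ L k (n-p), g (pt k (n-p) n v) := by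
    intro n
    unfold uniformCompMeasure
    rw [integral_smul_measure]
    rw [integral_finset_sum_measure (fun u _ => g.integrable _)]
    have hd : ∀ u ∈ compositions (k+1) (n-p),
        ∫ x, g x ∂(Measure.dirac fun i => ((u i : ℝ)/n)) = g (fun i => (u i:ℝ)/n) :=
      fun u _ => integral_dirac' _ _ g.continuous.stronglyMeasurable
    rw [Finset.sum_congr rfl hd, sum_bij_comp k (n-p) n (fun z => g z)]
    simp [ENNReal.toReal_inv]
  have h1 := tendsto_sum_integral k p g
  have h2 := tendsto_card k p
  have hfk : ((Nat.factorial k : ℝ))⁻¹ ≠ 0 :=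
    inv_ne_zero (Nat.cast_ne_zero.2 (Nat.factorial_ne_zero k))
  have h2' : Tendsto (fun n : ℕ => ((n:ℝ)^k) / ((compositions (k+1) (n-p)).card : ℝ)) atTop
      (nhds ((Nat.factorial k : ℝ))) := by
    have h3 := h2.inv₀ hfk
    rw [inv_inv] at h3
    refine h3.congr fun n => ?_
    rw [inv_div]
  have hmul := h1.mul h2'
  have heqs : (fun n : ℕ => (((n:ℝ)^k)⁻¹ * ∑ v ∈ L k (n-p), g (pt k (n-p) n v))
        * ((n:ℝ)^k / ((compositions (k+1) (n-p)).card : ℝ)))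
      =ᶠ[atTop] (fun n => ∫ x, g x ∂(uniformCompMeasure (k+1) p n)) := by
    filter_upwards [eventually_ge_atTop 1] with n hn1
    rw [hLHS n]
    have hn0 : ((n:ℝ)^k) ≠ 0 := pow_ne_zero _ (Nat.cast_ne_zero.2 (by omega))
    have hc0 : ((compositions (k+1) (n-p)).card : ℝ) ≠ 0 :=
      Nat.cast_ne_zero.2 (hcardpos n).ne'
    field_simp
  have hfin := hmul.congr' heqs
  rw [dirichlet_integral k g]
  rw [show (Nat.factorial k : ℝ) * (∫ y : Fin k → ℝ, Set.indicator (simplexSet k) (fext k g) y)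
      = (∫ y : Fin k → ℝ, Set.indicator (simplexSet k) (fext k g) y) * (Nat.factorial k : ℝ)
    from mul_comm _ _]
  exact hfin
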